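/- arXiv:1103.2849 — 3 statements merged into one kernel-verified Lean document; each statement's English description precedes it below -/
import Mathlib

section
/- The Möbius function of the partition lattice evaluated between a partition x and a coarser partition t = {T_1,...,T_k} equals (-1)^{|x|+|t|} (n_1-1)!···(n_k-1)!, where n_i is the number of blocks of x contained in T_i. -/
open scoped Classical

namespace MuPartAux
open Finset

variable {β : Type*} [DecidableEq β]

lemma avoid_parts_of_mem {T : Finset β} (ρ : Finpartition T) {B : Finset β} (hB : B ∈ ρ.parts) :
    (ρ.avoid B).parts = ρ.parts.erase B := by
  ext c
  rw [Finpartition.mem_avoid, mem_erase]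
  constructor
  · rintro ⟨d, hd, hdB, rfl⟩
    have hne : d ≠ B := fun h => hdB (le_of_eq h)
    have hdis : Disjoint d B := ρ.disjoint hd hB hne
    rw [Finset.sdiff_eq_self_iff_disjoint.2 hdis]
    exact ⟨hne, hd⟩
  · rintro ⟨hne, hc⟩
    have hdis : Disjoint c B := ρ.disjoint hc hB hne
    exact ⟨c, hc, fun hle => ρ.ne_bot hc (hdis.eq_bot_of_le hle),
      Finset.sdiff_eq_self_iff_disjoint.2 hdis⟩

lemma lemK : ∀ (n : ℕ) (T : Finset β), T.card = n →
    ∑ ρ : Finpartition T, ((-1 : ℤ)) ^ ρ.parts.card * ∏ C ∈ ρ.parts, ((C.card - 1).factorial : ℤ)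
      = if T.card ≤ 1 then (-1) ^ T.card else 0 := by
  intro n
  induction n using Nat.strong_induction_on with
  | _ n IH =>
  intro T hT
  rcases T.eq_empty_or_nonempty with rfl | hne
  · haveI : Unique (Finpartition (∅ : Finset β)) := inferInstanceAs (Unique (Finpartition (⊥ : Finset β)))
    rw [Fintype.sum_unique]
    have : (default : Finpartition (∅ : Finset β)).parts = ∅ :=
      Finpartition.parts_eq_empty_iff.2 rfl
    simp [this]
  obtain ⟨a, ha⟩ := hne
  subst hT
  have hmap : ∀ ρ : Finpartition T, ρ ∈ (univ : Finset (Finpartition T)) →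
      ρ.part a ∈ T.powerset.filter (fun B => a ∈ B) := fun ρ _ => by
    rw [mem_filter, mem_powerset]
    exact ⟨ρ.le (ρ.part_mem.2 ha), ρ.mem_part ha⟩
  rw [← Finset.sum_fiberwise_of_maps_to hmap]
  have inner : ∀ B ∈ T.powerset.filter (fun B => a ∈ B),
      (∑ ρ ∈ univ.filter (fun ρ : Finpartition T => ρ.part a = B),
        ((-1 : ℤ)) ^ ρ.parts.card * ∏ C ∈ ρ.parts, ((C.card - 1).factorial : ℤ))
        = -(((B.card - 1).factorial : ℤ)) *
            (if (T \ B).card ≤ 1 then (-1 : ℤ) ^ ((T \ B).card) else 0) := by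
    intro B hB
    rw [mem_filter, mem_powerset] at hB
    obtain ⟨hBT, haB⟩ := hB
    have hBne : B ≠ (⊥ : Finset β) := fun h => by simp [h] at haB
    have hdisj : Disjoint (T \ B) B := sdiff_disjoint
    have hsup : (T \ B) ⊔ B = T := sdiff_sup_cancel hBT
    have hcard : (T \ B).card < T.card := by
      have h1 : 1 ≤ B.card := card_pos.2 ⟨a, haB⟩
      have h2 := card_le_card hBT
      have h3 : 1 ≤ T.card := card_pos.2 ⟨a, ha⟩
      have h4 := card_sdiff_of_subset hBT
      omega
    rw [show -(((B.card - 1).factorial : ℤ)) *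
            (if (T \ B).card ≤ 1 then (-1 : ℤ) ^ ((T \ B).card) else 0)
        = ∑ ρ' : Finpartition (T \ B), -(((B.card - 1).factorial : ℤ)) *
            ((-1 : ℤ) ^ ρ'.parts.card * ∏ C ∈ ρ'.parts, ((C.card - 1).factorial : ℤ)) by
      rw [← Finset.mul_sum, IH _ hcard _ rfl]]
    refine Finset.sum_bij' (fun ρ _ => ρ.avoid B) (fun ρ' _ => ρ'.extend hBne hdisj hsup)
      (fun ρ hρ => mem_univ _) ?_ ?_ ?_ ?_
    · intro ρ' _
      rw [mem_filter]
      refine ⟨mem_univ _, ?_⟩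
      exact Finpartition.part_eq_of_mem _ (by rw [Finpartition.extend_parts]; exact mem_insert_self _ _) haB
    · intro ρ hρ
      rw [mem_filter] at hρ
      have hBmem : B ∈ ρ.parts := hρ.2 ▸ ρ.part_mem.2 ha
      apply Finpartition.ext
      rw [Finpartition.extend_parts, avoid_parts_of_mem ρ hBmem, insert_erase hBmem]
    · intro ρ' _
      have hBnotmem : B ∉ ρ'.parts := fun h => by
        have := ρ'.le h haB
        simp at this
        exact this.2 haB
      apply Finpartition.ext
      rw [avoid_parts_of_mem _ (by rw [Finpartition.extend_parts]; exact mem_insert_self _ _),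
        Finpartition.extend_parts, erase_insert hBnotmem]
    · intro ρ hρ
      rw [mem_filter] at hρ
      have hBmem : B ∈ ρ.parts := hρ.2 ▸ ρ.part_mem.2 ha
      rw [avoid_parts_of_mem ρ hBmem]
      rw [show ρ.parts.card = (ρ.parts.erase B).card + 1 from (Finset.card_erase_add_one hBmem).symm,
        ← Finset.mul_prod_erase _ _ hBmem, pow_succ]
      ring
  rw [Finset.sum_congr rfl inner]
  have step : ∀ B : Finset β, -(((B.card - 1).factorial : ℤ)) *
      (if (T \ B).card ≤ 1 then (-1 : ℤ) ^ ((T \ B).card) else 0)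
      = if (T \ B).card ≤ 1 then -(((B.card - 1).factorial : ℤ)) * (-1 : ℤ) ^ ((T \ B).card) else 0 := by
    intro B; split <;> simp
  rw [Finset.sum_congr rfl (fun B _ => step B), ← Finset.sum_filter]
  have hsd : ∀ b ∈ T, T \ T.erase b = {b} := by
    intro b hb
    ext x
    simp only [mem_sdiff, mem_erase, mem_singleton, not_and]
    constructor
    · rintro ⟨hxT, h⟩
      by_contra hxb
      exact (h hxb) hxT
    · rintro rfl
      exact ⟨hb, fun h _ => absurd rfl h⟩
  by_cases hn : T.card ≤ 1
  · -- T = {a}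
    have hT1 : T.card = 1 := le_antisymm hn (card_pos.2 ⟨a, ha⟩)
    obtain ⟨b, hb⟩ := card_eq_one.mp hT1
    have hab : a = b := by rw [hb, mem_singleton] at ha; exact ha
    subst hab
    rw [if_pos hn]
    have hone : ((T.powerset.filter (fun B => a ∈ B)).filter (fun B => (T \ B).card ≤ 1))
        = {{a}} := by
      ext B
      simp only [mem_filter, mem_powerset, mem_singleton, hb, subset_singleton_iff]
      constructor
      · rintro ⟨⟨h1 | rfl, h2⟩, h3⟩
        · exact absurd (h1 ▸ h2) (notMem_empty a)
        · rfl
      · rintro rfl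
        refine ⟨⟨Or.inr rfl, mem_singleton_self a⟩, ?_⟩
        rw [sdiff_self]
        simp
    rw [hone, Finset.sum_singleton, hT1, hb, sdiff_self]
    simp
  · -- T.card ≥ 2
    rw [if_neg hn]
    have hset : ((T.powerset.filter (fun B => a ∈ B)).filter (fun B => (T \ B).card ≤ 1))
        = insert T ((T.erase a).image (fun b => T.erase b)) := by
      ext B
      simp only [mem_filter, mem_powerset, mem_insert, mem_image, mem_erase]
      constructor
      · rintro ⟨⟨hBT, haB⟩, hle⟩
        rcases Nat.le_one_iff_eq_zero_or_eq_one.mp hle with h0 | h1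
        · exact Or.inl (Subset.antisymm hBT
            (sdiff_eq_empty_iff_subset.mp (card_eq_zero.mp h0)))
        · obtain ⟨b, hbsd⟩ := card_eq_one.mp h1
          have hbm : b ∈ T ∧ b ∉ B := mem_sdiff.mp (hbsd ▸ mem_singleton_self b)
          have hba : b ≠ a := fun h => hbm.2 (h ▸ haB)
          refine Or.inr ⟨b, ⟨hba, hbm.1⟩, ?_⟩
          ext x
          rw [mem_erase]
          constructor
          · rintro ⟨hxb, hxT⟩
            by_contra hxB
            have : x ∈ T \ B := mem_sdiff.mpr ⟨hxT, hxB⟩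
            rw [hbsd, mem_singleton] at this
            exact hxb this
          · intro hxB
            refine ⟨fun h => hbm.2 (h ▸ hxB), hBT hxB⟩
      · rintro (rfl | ⟨b, ⟨hba, hbT⟩, rfl⟩)
        · refine ⟨⟨subset_rfl, ha⟩, ?_⟩
          rw [sdiff_self]
          simp
        · refine ⟨⟨erase_subset _ _, mem_erase.mpr ⟨fun h => hba h.symm, ha⟩⟩, ?_⟩
          rw [hsd b hbT, card_singleton]
    rw [hset]
    have hTnot : T ∉ (T.erase a).image (fun b => T.erase b) := by
      rw [mem_image]
      rintro ⟨b, hb, heq⟩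
      have hbT : b ∈ T := (mem_erase.mp hb).2
      have := card_erase_of_mem hbT
      rw [heq] at this
      omega
    rw [Finset.sum_insert hTnot]
    rw [Finset.sum_image (fun b hb c hc h => by
      by_contra hbc
      have hbT : b ∈ T := (mem_erase.mp hb).2
      have hmm : b ∈ T.erase c := mem_erase.mpr ⟨hbc, hbT⟩
      rw [← h] at hmm
      exact (mem_erase.mp hmm).1 rfl)]
    obtain ⟨k, hk⟩ : ∃ k, T.card = k + 2 := ⟨T.card - 2, by omega⟩
    have hterm : ∀ b ∈ T.erase a, -((((T.erase b).card - 1).factorial : ℤ)) *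
        (-1 : ℤ) ^ ((T \ (T.erase b)).card) = ((k.factorial : ℤ)) := by
      intro b hb
      have hbT : b ∈ T := (mem_erase.mp hb).2
      rw [hsd b hbT, card_singleton, card_erase_of_mem hbT, pow_one,
        show T.card - 1 - 1 = k from by omega]
      ring
    rw [Finset.sum_congr rfl hterm, Finset.sum_const, card_erase_of_mem ha,
      sdiff_self]
    rw [show (⊥ : Finset β).card = 0 from rfl, pow_zero,
      show T.card - 1 = k + 1 from by omega, Nat.factorial_succ]
    push_cast
    ring

variable {β : Type*} [DecidableEq β]

/-- The restriction of a refinement `π ≤ τ` to a part `T` of `τ`. -/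
def restr {u : Finset β} (π τ : Finpartition u) (hπ : π ≤ τ) (T : Finset β)
    (hT : T ∈ τ.parts) : Finpartition T where
  parts := π.parts.filter (· ⊆ T)
  supIndep := π.supIndep.subset (filter_subset _ _)
  sup_parts := by
    apply le_antisymm
    · exact Finset.sup_le fun A hA => (mem_filter.mp hA).2
    · intro b hb
      obtain ⟨A, hA, hbA⟩ := π.exists_mem (τ.le hT hb)
      obtain ⟨T', hT', hAT'⟩ := hπ hA
      have : T' = T := τ.eq_of_mem_parts hT' hT (hAT' hbA) hb
      subst this
      exact mem_sup.mpr ⟨A, mem_filter.mpr ⟨hA, hAT'⟩, hbA⟩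
  bot_notMem := fun h => π.bot_notMem (mem_filter.mp h).1

lemma restr_parts {u : Finset β} (π τ : Finpartition u) (hπ : π ≤ τ) (T : Finset β)
    (hT : T ∈ τ.parts) : (restr π τ hπ T hT).parts = π.parts.filter (· ⊆ T) := rfl

lemma bind_restr {u : Finset β} (π τ : Finpartition u) (hπ : π ≤ τ) :
    τ.bind (fun T hT => restr π τ hπ T hT) = π := by
  apply Finpartition.ext
  ext A
  rw [Finpartition.mem_bind]
  constructor
  · rintro ⟨T, hT, hA⟩
    exact (mem_filter.mp hA).1
  · intro hA
    obtain ⟨T, hT, hAT⟩ := hπ hA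
    exact ⟨T, hT, mem_filter.mpr ⟨hA, hAT⟩⟩

lemma restr_bind {u : Finset β} (τ : Finpartition u) (Q : ∀ T ∈ τ.parts, Finpartition T)
    (hle : τ.bind Q ≤ τ) (T : Finset β) (hT : T ∈ τ.parts) :
    restr (τ.bind Q) τ hle T hT = Q T hT := by
  apply Finpartition.ext
  ext A
  rw [restr_parts, mem_filter, Finpartition.mem_bind]
  constructor
  · rintro ⟨⟨T', hT', hA⟩, hAT⟩
    have hne : A.Nonempty := (Q T' hT').nonempty_of_mem_parts hA
    obtain ⟨b, hb⟩ := hne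
    have : T' = T := τ.eq_of_mem_parts hT' hT ((Q T' hT').le hA hb) (hAT hb)
    subst this
    exact hA
  · intro hA
    exact ⟨⟨T, hT, hA⟩, (Q T hT).le hA⟩

lemma bind_le {u : Finset β} (τ : Finpartition u) (Q : ∀ T ∈ τ.parts, Finpartition T) :
    τ.bind Q ≤ τ := by
  intro A hA
  rw [Finpartition.mem_bind] at hA
  obtain ⟨T, hT, hA⟩ := hA
  exact ⟨T, hT, (Q T hT).le hA⟩

lemma bot_iff_parts_card_one {u : Finset β} (τ : Finpartition u) :
    τ = ⊥ ↔ ∀ T ∈ τ.parts, T.card = 1 := by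
  constructor
  · rintro rfl T hT
    rw [Finpartition.parts_bot, mem_map] at hT
    obtain ⟨b, _, rfl⟩ := hT
    exact card_singleton b
  · intro h
    apply le_antisymm _ bot_le
    intro A hA
    obtain ⟨b, rfl⟩ := card_eq_one.mp (h A hA)
    have hb : b ∈ u := τ.le hA (mem_singleton_self b)
    exact ⟨{b}, Finpartition.mem_bot_iff.mpr ⟨b, hb, rfl⟩, le_rfl⟩

lemma parts_pairwise_disjoint {u : Finset β} (τ : Finpartition u)
    (Q : ∀ T ∈ τ.parts, Finpartition T) :
    ((τ.parts.attach : Finset {x // x ∈ τ.parts}) : Set {x // x ∈ τ.parts}).PairwiseDisjoint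
      (fun T : {x // x ∈ τ.parts} => (Q T.1 T.2).parts) := by
  rintro ⟨T, hT⟩ - ⟨T', hT'⟩ - hne
  simp only [Function.onFun]
  rw [Finset.disjoint_left]
  intro A hA hA'
  have hTne : T ≠ T' := fun h => hne (by simp [h])
  have hd := τ.disjoint hT hT' hTne
  exact (Q T hT).ne_bot hA
    (le_bot_iff.mp ((le_inf ((Q T hT).le hA) ((Q T' hT').le hA')).trans hd.le_bot))

lemma core' (u : Finset β) (τ : Finpartition u) :
    ∑ π ∈ univ.filter (fun π : Finpartition u => π ≤ τ),
      ((-1 : ℤ)) ^ π.parts.card * ∏ C ∈ π.parts, ((C.card - 1).factorial : ℤ)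
      = if τ = ⊥ then (-1 : ℤ) ^ u.card else 0 := by
  have key : (∑ π ∈ univ.filter (fun π : Finpartition u => π ≤ τ),
      ((-1 : ℤ)) ^ π.parts.card * ∏ C ∈ π.parts, ((C.card - 1).factorial : ℤ))
      = ∑ p ∈ τ.parts.pi (fun T => (univ : Finset (Finpartition T))),
          ∏ x ∈ τ.parts.attach,
            ((-1 : ℤ) ^ (p x.1 x.2).parts.card *
              ∏ C ∈ (p x.1 x.2).parts, ((C.card - 1).factorial : ℤ)) := by
    refine Finset.sum_bij' (fun π hπ => fun T hT => restr π τ (mem_filter.mp hπ).2 T hT)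
      (fun p _ => τ.bind (fun T hT => p T hT)) ?_ ?_ ?_ ?_ ?_
    · intro π hπ
      exact mem_pi.mpr fun T hT => mem_univ _
    · intro p hp
      exact mem_filter.mpr ⟨mem_univ _, bind_le τ _⟩
    · intro π hπ
      exact bind_restr π τ _
    · intro p hp
      funext T hT
      exact restr_bind τ (fun T hT => p T hT) _ T hT
    · intro π hπ
      have h := (mem_filter.mp hπ).2
      conv_lhs => rw [← bind_restr π τ h]
      rw [Finpartition.card_bind, ← Finset.prod_pow_eq_pow_sum,
        Finpartition.bind_parts, Finset.prod_biUnion (parts_pairwise_disjoint τ _),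
        ← Finset.prod_mul_distrib]
  rw [key]
  have hps := Finset.prod_sum (ι := Finset β) τ.parts
    (fun T => (univ : Finset (Finpartition T)))
    (fun T ρ => ((-1 : ℤ)) ^ ρ.parts.card * ∏ C ∈ ρ.parts, ((C.card - 1).factorial : ℤ))
  refine Eq.trans hps.symm ?_
  have hstep : ∀ T ∈ τ.parts,
      (∑ ρ ∈ (univ : Finset (Finpartition T)),
        ((-1 : ℤ)) ^ ρ.parts.card * ∏ C ∈ ρ.parts, ((C.card - 1).factorial : ℤ))
        = if T.card ≤ 1 then (-1 : ℤ) ^ T.card else 0 := fun T _ => lemK T.card T rfl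
  rw [Finset.prod_congr rfl hstep]
  by_cases hbot : τ = ⊥
  · rw [if_pos hbot]
    have h1 : ∀ T ∈ τ.parts, (if T.card ≤ 1 then (-1 : ℤ) ^ T.card else 0) = (-1 : ℤ) ^ T.card :=
      fun T hT => if_pos (le_of_eq ((bot_iff_parts_card_one τ).mp hbot T hT))
    rw [Finset.prod_congr rfl h1, Finset.prod_pow_eq_pow_sum, τ.sum_card_parts]
  · rw [if_neg hbot]
    obtain ⟨T, hT, hcard⟩ : ∃ T ∈ τ.parts, T.card ≠ 1 := by
      by_contra h
      push_neg at h
      exact hbot ((bot_iff_parts_card_one τ).mpr h)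
    refine Finset.prod_eq_zero hT ?_
    have hpos : 0 < T.card := card_pos.2 (τ.nonempty_of_mem_parts hT)
    exact if_neg (fun h => hcard (le_antisymm h hpos))
variable {α : Type*} [DecidableEq α] {s : Finset α}

/-- The partition of `x.parts` induced by a coarser partition `y`. -/
def fibers (x y : Finpartition s) (h : x ≤ y) : Finpartition x.parts where
  parts := y.parts.image (fun Y => x.parts.filter (· ⊆ Y))
  supIndep := by
    rw [supIndep_iff_pairwiseDisjoint]
    intro c hc c' hc' hne
    rw [Finset.mem_coe, mem_image] at hc hc'
    obtain ⟨Y, hY, rfl⟩ := hc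
    obtain ⟨Y', hY', rfl⟩ := hc'
    have hYY' : Y ≠ Y' := fun hh => hne (by rw [hh])
    rw [Function.onFun, Finset.disjoint_left]
    intro A hA hA'
    simp only [id_eq] at hA hA'
    rw [mem_filter] at hA hA'
    exact x.ne_bot hA.1
      (le_bot_iff.mp ((le_inf hA.2 hA'.2).trans (y.disjoint hY hY' hYY').le_bot))
  sup_parts := by
    apply le_antisymm
    · refine Finset.sup_le fun c hc => ?_
      rw [mem_image] at hc
      obtain ⟨Y, hY, rfl⟩ := hc
      exact filter_subset _ _
    · intro A hA
      obtain ⟨Y, hY, hAY⟩ := h hA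
      exact mem_sup.mpr ⟨_, mem_image.mpr ⟨Y, hY, rfl⟩, mem_filter.mpr ⟨hA, hAY⟩⟩
  bot_notMem := by
    rw [mem_image]
    rintro ⟨Y, hY, hbot⟩
    obtain ⟨b, hb⟩ := y.nonempty_of_mem_parts hY
    obtain ⟨A, hA, hbA⟩ := x.exists_mem (y.le hY hb)
    obtain ⟨Y', hY', hAY'⟩ := h hA
    have : Y' = Y := y.eq_of_mem_parts hY' hY (hAY' hbA) hb
    subst this
    have : A ∈ x.parts.filter (· ⊆ Y') := mem_filter.mpr ⟨hA, hAY'⟩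
    rw [hbot] at this
    exact notMem_empty A this

lemma fibers_parts (x y : Finpartition s) (h : x ≤ y) :
    (fibers x y h).parts = y.parts.image (fun Y => x.parts.filter (· ⊆ Y)) := rfl

lemma sup_fiber_of_part (x y : Finpartition s) (h : x ≤ y) {Y : Finset α}
    (hY : Y ∈ y.parts) : (x.parts.filter (· ⊆ Y)).sup id = Y :=
  (restr x y h Y hY).sup_parts

lemma fiber_injOn (x y : Finpartition s) (h : x ≤ y) :
    ∀ Y ∈ y.parts, ∀ Y' ∈ y.parts,
      x.parts.filter (· ⊆ Y) = x.parts.filter (· ⊆ Y') → Y = Y' := by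
  intro Y hY Y' hY' heq
  rw [← sup_fiber_of_part x y h hY, ← sup_fiber_of_part x y h hY', heq]

/-- The partition of `s` obtained from a partition of `x.parts` by taking unions. -/
def unions (x : Finpartition s) (π : Finpartition x.parts) : Finpartition s where
  parts := π.parts.image (fun C => C.sup id)
  supIndep := by
    rw [supIndep_iff_pairwiseDisjoint]
    intro c hc c' hc' hne
    rw [Finset.mem_coe, mem_image] at hc hc'
    obtain ⟨C, hC, rfl⟩ := hc
    obtain ⟨C', hC', rfl⟩ := hc'
    have hCC' : C ≠ C' := fun hh => hne (by rw [hh])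
    rw [Function.onFun, Finset.disjoint_left]
    intro b hb hb'
    simp only [id_eq] at hb hb'
    rw [mem_sup] at hb hb'
    obtain ⟨A, hAC, hbA⟩ := hb
    obtain ⟨A', hA'C, hbA'⟩ := hb'
    have hA : A ∈ x.parts := π.le hC hAC
    have hA' : A' ∈ x.parts := π.le hC' hA'C
    have : A = A' := x.eq_of_mem_parts hA hA' hbA hbA'
    subst this
    exact (Finset.disjoint_left.mp (π.disjoint hC hC' hCC') hAC) hA'C
  sup_parts := by
    apply le_antisymm
    · refine Finset.sup_le fun c hc => ?_
      rw [mem_image] at hc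
      obtain ⟨C, hC, rfl⟩ := hc
      refine Finset.sup_le fun A hA => ?_
      exact x.le (π.le hC hA)
    · intro b hb
      obtain ⟨A, hA, hbA⟩ := x.exists_mem hb
      obtain ⟨C, hC, hAC⟩ := π.exists_mem hA
      exact mem_sup.mpr ⟨_, mem_image.mpr ⟨C, hC, rfl⟩, mem_sup.mpr ⟨A, hAC, hbA⟩⟩
  bot_notMem := by
    rw [mem_image]
    rintro ⟨C, hC, hbot⟩
    obtain ⟨A, hAC⟩ := π.nonempty_of_mem_parts hC
    obtain ⟨b, hbA⟩ := x.nonempty_of_mem_parts (π.le hC hAC)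
    have : b ∈ C.sup id := mem_sup.mpr ⟨A, hAC, hbA⟩
    rw [hbot] at this
    exact notMem_empty b this

lemma unions_parts (x : Finpartition s) (π : Finpartition x.parts) :
    (unions x π).parts = π.parts.image (fun C => C.sup id) := rfl

lemma fiber_sup_eq (x : Finpartition s) (π : Finpartition x.parts) {C : Finset (Finset α)}
    (hC : C ∈ π.parts) : x.parts.filter (· ⊆ C.sup id) = C := by
  ext A
  rw [mem_filter]
  constructor
  · rintro ⟨hA, hAsup⟩
    obtain ⟨b, hbA⟩ := x.nonempty_of_mem_parts hA
    obtain ⟨A', hA'C, hbA'⟩ := mem_sup.mp (hAsup hbA)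
    have : A = A' := x.eq_of_mem_parts hA (π.le hC hA'C) hbA hbA'
    subst this
    exact hA'C
  · intro hAC
    exact ⟨π.le hC hAC, Finset.le_sup (f := id) hAC⟩

lemma le_unions (x : Finpartition s) (π : Finpartition x.parts) : x ≤ unions x π := by
  intro A hA
  obtain ⟨C, hC, hAC⟩ := π.exists_mem hA
  exact ⟨C.sup id, mem_image.mpr ⟨C, hC, rfl⟩, Finset.le_sup (f := id) hAC⟩

lemma unions_fibers (x y : Finpartition s) (h : x ≤ y) : unions x (fibers x y h) = y := by
  apply Finpartition.ext
  rw [unions_parts, fibers_parts, Finset.image_image]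
  rw [show ((fun C : Finset (Finset α) => C.sup id) ∘ fun Y => x.parts.filter (· ⊆ Y))
      = fun Y => (x.parts.filter (· ⊆ Y)).sup id from rfl]
  calc y.parts.image (fun Y => (x.parts.filter (· ⊆ Y)).sup id)
      = y.parts.image id := Finset.image_congr fun Y hY => sup_fiber_of_part x y h hY
    _ = y.parts := Finset.image_id

lemma fibers_unions (x : Finpartition s) (π : Finpartition x.parts)
    (h : x ≤ unions x π) : fibers x (unions x π) h = π := by
  apply Finpartition.ext
  rw [fibers_parts, unions_parts, Finset.image_image]
  calc π.parts.image ((fun Y => x.parts.filter (· ⊆ Y)) ∘ fun C => C.sup id)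
      = π.parts.image id := Finset.image_congr fun C hC => fiber_sup_eq x π hC
    _ = π.parts := Finset.image_id


lemma self_fiber (t : Finpartition s) {T : Finset α} (hT : T ∈ t.parts) :
    t.parts.filter (· ⊆ T) = {T} := by
  ext A
  rw [mem_filter, mem_singleton]
  constructor
  · rintro ⟨hA, hAT⟩
    exact t.disjoint.eq_of_le hA hT (t.ne_bot hA) hAT
  · rintro rfl
    exact ⟨hT, subset_rfl⟩

lemma fibers_eq_bot_iff (x t : Finpartition s) (h : x ≤ t) :
    fibers x t h = ⊥ ↔ x = t := by
  constructor
  · intro hbot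
    refine le_antisymm h ?_
    intro T hT
    have hfib : x.parts.filter (· ⊆ T) ∈ (fibers x t h).parts :=
      mem_image.mpr ⟨T, hT, rfl⟩
    rw [hbot, Finpartition.mem_bot_iff] at hfib
    obtain ⟨A, hA, hAfib⟩ := hfib
    have hTA : T = A := by
      rw [← sup_fiber_of_part x t h hT, ← hAfib]
      simp
    exact ⟨A, hA, le_of_eq hTA⟩
  · rintro rfl
    rw [bot_iff_parts_card_one]
    intro c hc
    obtain ⟨T, hT, rfl⟩ := mem_image.mp hc
    rw [self_fiber x hT, card_singleton]

lemma core [LocallyFiniteOrder (Finpartition s)] (x t : Finpartition s) (hxt : x ≤ t) :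
    (∑ y ∈ Finset.Icc x t, ((-1 : ℤ)) ^ y.parts.card *
        ∏ Y ∈ y.parts, (((x.parts.filter (· ⊆ Y)).card - 1).factorial : ℤ))
      = if x = t then (-1 : ℤ) ^ x.parts.card else 0 := by
  have key : (∑ y ∈ Finset.Icc x t, ((-1 : ℤ)) ^ y.parts.card *
        ∏ Y ∈ y.parts, (((x.parts.filter (· ⊆ Y)).card - 1).factorial : ℤ))
      = ∑ π ∈ univ.filter (fun π : Finpartition x.parts => π ≤ fibers x t hxt),
          ((-1 : ℤ)) ^ π.parts.card * ∏ C ∈ π.parts, ((C.card - 1).factorial : ℤ) := by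
    refine Finset.sum_bij' (fun y hy => fibers x y (Finset.mem_Icc.mp hy).1)
      (fun π _ => unions x π) ?_ ?_ ?_ ?_ ?_
    · intro y hy
      rw [mem_filter]
      refine ⟨mem_univ _, ?_⟩
      intro c hc
      obtain ⟨Y, hY, rfl⟩ := mem_image.mp hc
      obtain ⟨T, hT, hYT⟩ := (Finset.mem_Icc.mp hy).2 hY
      exact ⟨x.parts.filter (· ⊆ T), mem_image.mpr ⟨T, hT, rfl⟩,
        fun A hA => mem_filter.mpr ⟨(mem_filter.mp hA).1, (mem_filter.mp hA).2.trans hYT⟩⟩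
    · intro π hπ
      rw [Finset.mem_Icc]
      refine ⟨le_unions x π, ?_⟩
      intro c hc
      obtain ⟨C, hC, rfl⟩ := mem_image.mp hc
      obtain ⟨D, hD, hCD⟩ := (mem_filter.mp hπ).2 hC
      obtain ⟨T, hT, rfl⟩ := mem_image.mp hD
      exact ⟨T, hT, Finset.sup_le fun A hA => (mem_filter.mp (hCD hA)).2⟩
    · intro y hy
      exact unions_fibers x y _
    · intro π hπ
      exact fibers_unions x π _
    · intro y hy
      have h1 := (Finset.mem_Icc.mp hy).1
      rw [fibers_parts,
        Finset.card_image_of_injOn (fun Y hY Y' hY' => fiber_injOn x y h1 Y hY Y' hY'),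
        Finset.prod_image (fun Y hY Y' hY' => fiber_injOn x y h1 Y hY Y' hY')]
  rw [key, core']
  by_cases hxt' : x = t
  · rw [if_pos ((fibers_eq_bot_iff x t hxt).mpr hxt'), if_pos hxt']
  · rw [if_neg (fun h => hxt' ((fibers_eq_bot_iff x t hxt).mp h)), if_neg hxt']

lemma main [LocallyFiniteOrder (Finpartition s)] :
    ∀ x t : Finpartition s, x ≤ t →
      IncidenceAlgebra.mu ℤ x t =
        (-1) ^ (x.parts.card + t.parts.card) *
          ∏ T ∈ t.parts,
            (Nat.factorial ((x.parts.filter (fun B => B ⊆ T)).card - 1) : ℤ) := by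
  suffices H : ∀ t x : Finpartition s, x ≤ t →
      IncidenceAlgebra.mu ℤ x t =
        (-1) ^ (x.parts.card + t.parts.card) *
          ∏ T ∈ t.parts,
            (Nat.factorial ((x.parts.filter (fun B => B ⊆ T)).card - 1) : ℤ) by
    exact fun x t h => H t x h
  intro t
  induction t using WellFoundedLT.induction with
  | _ t IH =>
  intro x hxt
  rcases eq_or_lt_of_le hxt with rfl | hlt
  · rw [IncidenceAlgebra.mu_self]
    have hone : ∀ T ∈ x.parts,
        ((Nat.factorial ((x.parts.filter (fun B => B ⊆ T)).card - 1)) : ℤ) = 1 := by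
      intro T hT
      rw [self_fiber x hT, card_singleton]
      norm_num
    rw [Finset.prod_congr rfl hone, Finset.prod_const_one,
      Even.neg_one_pow ⟨x.parts.card, rfl⟩, mul_one]
  · have hne : x ≠ t := ne_of_lt hlt
    rw [IncidenceAlgebra.mu_eq_neg_sum_Ico_of_ne hne]
    have hIH : ∀ y ∈ Finset.Ico x t, IncidenceAlgebra.mu ℤ x y =
        (-1) ^ (x.parts.card + y.parts.card) *
          ∏ Y ∈ y.parts,
            (Nat.factorial ((x.parts.filter (fun B => B ⊆ Y)).card - 1) : ℤ) := by
      intro y hy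
      have h2 := Finset.mem_Ico.mp hy
      exact IH y h2.2 x h2.1
    rw [Finset.sum_congr rfl hIH]
    have hcore := core x t hxt
    rw [if_neg hne, Finset.Icc_eq_cons_Ico hxt, Finset.sum_cons] at hcore
    have hsplit : ∀ y : Finpartition s,
        ((-1 : ℤ)) ^ (x.parts.card + y.parts.card) *
          ∏ Y ∈ y.parts,
            (Nat.factorial ((x.parts.filter (fun B => B ⊆ Y)).card - 1) : ℤ)
        = (-1 : ℤ) ^ x.parts.card * (((-1 : ℤ)) ^ y.parts.card *
            ∏ Y ∈ y.parts,
              (Nat.factorial ((x.parts.filter (fun B => B ⊆ Y)).card - 1) : ℤ)) := by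
      intro y
      rw [pow_add]
      ring
    rw [Finset.sum_congr rfl (fun y _ => hsplit y), ← Finset.mul_sum]
    have hS : (∑ y ∈ Finset.Ico x t, ((-1 : ℤ)) ^ y.parts.card *
          ∏ Y ∈ y.parts,
            (Nat.factorial ((x.parts.filter (fun B => B ⊆ Y)).card - 1) : ℤ))
        = -(((-1 : ℤ)) ^ t.parts.card *
            ∏ Y ∈ t.parts,
              (Nat.factorial ((x.parts.filter (fun B => B ⊆ Y)).card - 1) : ℤ)) := by
      linarith [hcore]
    rw [hS, pow_add]
    ring

end MuPartAux

/-- The Möbius function of the lattice of set partitions of a finite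
set, evaluated between a partition `x` and a coarser partition `t = {T_1,…,T_k}`,
equals `(-1)^{|x|+|t|} (n_1-1)!⋯(n_k-1)!`, where `n_i` is the number of blocks of `x`
contained in the block `T_i` of `t`. -/
theorem mu_partition_lattice {α : Type*} [DecidableEq α] (s : Finset α) :
    letI : LocallyFiniteOrder (Finpartition s) := Fintype.toLocallyFiniteOrder
    ∀ x t : Finpartition s, x ≤ t →
      IncidenceAlgebra.mu ℤ x t =
        (-1) ^ (x.parts.card + t.parts.card) *
          ∏ T ∈ t.parts,
            (Nat.factorial ((x.parts.filter (fun B => B ⊆ T)).card - 1) : ℤ) := by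
  letI : LocallyFiniteOrder (Finpartition s) := Fintype.toLocallyFiniteOrder
  exact MuPartAux.main
end

section
/- Feynman diagram expansion: for a unital linear form ρ on a graded connected cocommutative Hopf algebra H with convolution logarithm τ, and any element X of positive degree, ρ(X) = Σ_{k≥1} (1/k!) τ^{⊗k}(Δ̄^{[k]}(X)), where Δ̄^{[k]} denotes the iterated reduced coproduct. -/
open TensorProduct

/-- The convolution product `ρ ∗ μ := (ρ ⊗ μ) ∘ Δ` of linear forms. -/
noncomputable def convProd {k H : Type*} [Field k] [AddCommGroup H] [Module k H]
    [Coalgebra k H] (ρ μ : H →ₗ[k] k) : H →ₗ[k] k :=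
  LinearMap.mul' k k ∘ₗ TensorProduct.map ρ μ ∘ₗ Coalgebra.comul

/-- Convolution powers `f^{∗n}`, with `f^{∗0} = ε` the counit. -/
noncomputable def convPow {k H : Type*} [Field k] [AddCommGroup H] [Module k H]
    [Coalgebra k H] (f : H →ₗ[k] k) : ℕ → (H →ₗ[k] k)
  | 0 => Coalgebra.counit
  | n + 1 => convProd f (convPow f n)

/-- The reduced coproduct `Δ̄(x) = Δ(x) - x ⊗ 1 - 1 ⊗ x`. -/
noncomputable def redComul {k H : Type*} [Field k] [Ring H] [Module k H]
    [Coalgebra k H] : H →ₗ[k] H ⊗[k] H :=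
  Coalgebra.comul - ((TensorProduct.mk k H H).flip 1 + TensorProduct.mk k H H 1)

/-- `redConvPow τ j = τ^{⊗(j+1)} ∘ Δ̄^{[j+1]}` : the composite of the `(j+1)`-fold
iterated reduced coproduct `Δ̄^{[j+1]}` (defined recursively from `Δ̄`) with the
tensor power `τ^{⊗(j+1)}` of the form `τ`. -/
noncomputable def redConvPow {k H : Type*} [Field k] [Ring H] [Module k H]
    [Coalgebra k H] (τ : H →ₗ[k] k) : ℕ → (H →ₗ[k] k)
  | 0 => τ
  | j + 1 => LinearMap.mul' k k ∘ₗ TensorProduct.map τ (redConvPow τ j) ∘ₗ redComul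

section Aux

lemma mem_biSup_finset {R M ι : Type*} [Semiring R] [AddCommMonoid M] [Module R M]
    (s : Finset ι) (P : ι → Submodule R M) {x : M} (hx : x ∈ ⨆ i ∈ s, P i) :
    ∃ f : ι → M, (∀ i ∈ s, f i ∈ P i) ∧ x = ∑ i ∈ s, f i := by
  classical
  induction s using Finset.induction_on generalizing x with
  | empty =>
    simp only [Finset.notMem_empty, iSup_false, iSup_bot, Submodule.mem_bot] at hx
    exact ⟨0, by simp, by simp [hx]⟩
  | @insert a s ha ih =>
    rw [show (⨆ i ∈ insert a s, P i) = P a ⊔ ⨆ i ∈ s, P i by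
      rw [Finset.iSup_insert]] at hx
    obtain ⟨y, hy, z, hz, rfl⟩ := Submodule.mem_sup.mp hx
    obtain ⟨f, hf, rfl⟩ := ih hz
    refine ⟨Function.update f a y, ?_, ?_⟩
    · intro i hi
      rcases Finset.mem_insert.mp hi with rfl | hi
      · simpa using hy
      · rw [Function.update_of_ne (fun h : i = a => ha (h ▸ hi))]
        exact hf i hi
    · rw [Finset.sum_insert ha, Function.update_self]
      congr 1
      exact Finset.sum_congr rfl fun i hi =>
        (Function.update_of_ne (fun h : i = a => ha (h ▸ hi)) _ _).symm

variable {k H : Type*} [Field k] [Ring H] [Bialgebra k H]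

lemma redConvPow_one (τ : H →ₗ[k] k) (hτ : τ 1 = 0) : ∀ n, redConvPow τ n 1 = 0
  | 0 => hτ
  | n + 1 => by
    have h1 : redComul (k := k) (H := H) 1 = -(1 ⊗ₜ[k] 1) := by
      simp [redComul, Bialgebra.comul_one, Algebra.TensorProduct.one_def]
    show (LinearMap.mul' k k) ((TensorProduct.map τ (redConvPow τ n)) (redComul 1)) = 0
    rw [h1, map_neg, map_neg]
    simp [hτ]

lemma convPow_succ_eq (τ : H →ₗ[k] k) (hτ : τ 1 = 0) :
    ∀ n (x : H), convPow τ (n + 1) x = redConvPow τ n x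
  | 0, x => by
    show (LinearMap.mul' k k) ((TensorProduct.map τ Coalgebra.counit) (Coalgebra.comul x)) = τ x
    rw [← LinearMap.rTensor_comp_lTensor, LinearMap.comp_apply,
      Coalgebra.lTensor_counit_comul, LinearMap.rTensor_tmul, LinearMap.mul'_apply, mul_one]
  | n + 1, x => by
    have hcomul : Coalgebra.comul (R := k) x
        = redComul x + (x ⊗ₜ[k] 1 + (1 : H) ⊗ₜ[k] x) := by
      simp [redComul]
    have hg : TensorProduct.map τ (convPow τ (n + 1)) =
        TensorProduct.map τ (redConvPow τ n) := by
      congr 1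
      exact LinearMap.ext (convPow_succ_eq τ hτ n)
    show (LinearMap.mul' k k) ((TensorProduct.map τ (convPow τ (n+1))) (Coalgebra.comul x)) = _
    rw [hg, hcomul, map_add, map_add, map_add, map_add]
    simp only [TensorProduct.map_tmul, LinearMap.mul'_apply, hτ,
      redConvPow_one τ hτ n, mul_zero, zero_mul, add_zero]
    rfl

end Aux

/-- Feynman diagram expansion. Let `H` be a graded connected
cocommutative Hopf algebra over a field of characteristic zero, `ρ` a unital form
with convolution logarithm `τ` (so `τ(1) = 0` and `ρ = exp^∗(τ)`, encoded degreewise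
by the finite exponential sums). Then for every homogeneous `X` of positive degree
`m`, `ρ(X) = Σ_{k≥1} (1/k!) τ^{⊗k}(Δ̄^{[k]}(X))`, the sum being finite (truncated at
`k = m`) by graduation. -/
theorem feynman_diagram_expansion {k H : Type*} [Field k] [CharZero k]
    [Ring H] [HopfAlgebra k H] (𝒜 : ℕ → Submodule k H) [GradedRing 𝒜]
    (hconn : 𝒜 0 = Submodule.span k {(1 : H)})
    (hgradedComul : ∀ n : ℕ, ∀ x ∈ 𝒜 n,
      Coalgebra.comul (R := k) x ∈
        ⨆ pq ∈ Finset.HasAntidiagonal.antidiagonal n,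
          LinearMap.range (TensorProduct.map (𝒜 pq.1).subtype (𝒜 pq.2).subtype))
    (hcocomm : ∀ x : H,
      (TensorProduct.comm k H H) (Coalgebra.comul (R := k) x) = Coalgebra.comul x)
    (ρ τ : H →ₗ[k] k) (hρ : ρ 1 = 1) (hτ : τ 1 = 0)
    (hlog : ∀ m : ℕ, ∀ x ∈ 𝒜 m,
      ρ x = ∑ n ∈ Finset.range (m + 1), (Nat.factorial n : k)⁻¹ • convPow τ n x) :
    ∀ m : ℕ, 0 < m → ∀ X ∈ 𝒜 m,
      ρ X = ∑ j ∈ Finset.range m,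
        (Nat.factorial (j + 1) : k)⁻¹ • redConvPow τ j X := by
  intro m hm X hX
  classical
  -- Step 1: the counit vanishes on X
  have hcounit : Coalgebra.counit (R := k) X = 0 := by
    by_cases h1 : (1 : H) = 0
    · have : X = 0 := by rw [← mul_one X, h1, mul_zero]
      rw [this, map_zero]
    obtain ⟨t, ht, hsum⟩ := mem_biSup_finset _ _ (hgradedComul m X hX)
    set φ : H ⊗[k] H →ₗ[k] H :=
      (TensorProduct.lid k H).toLinearMap ∘ₗ (Coalgebra.counit (R := k)).rTensor H with hφ
    set ψ : H ⊗[k] H →ₗ[k] H :=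
      (TensorProduct.rid k H).toLinearMap ∘ₗ (Coalgebra.counit (R := k)).lTensor H with hψ
    have hφmem : ∀ pq ∈ Finset.HasAntidiagonal.antidiagonal m, φ (t pq) ∈ 𝒜 pq.2 := by
      intro pq hpq
      obtain ⟨u, hu⟩ := ht pq hpq
      rw [← hu]
      clear hu
      induction u using TensorProduct.induction_on with
      | zero => simpa using Submodule.zero_mem _
      | tmul a b =>
        rw [TensorProduct.map_tmul]
        simp only [hφ, LinearMap.comp_apply, Submodule.coe_subtype,
          LinearMap.rTensor_tmul, TensorProduct.lid_tmul, LinearEquiv.coe_coe]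
        exact Submodule.smul_mem _ _ b.2
      | add u v hu hv => rw [map_add, map_add]; exact Submodule.add_mem _ hu hv
    have hψmem : ∀ pq ∈ Finset.HasAntidiagonal.antidiagonal m, ψ (t pq) ∈ 𝒜 pq.1 := by
      intro pq hpq
      obtain ⟨u, hu⟩ := ht pq hpq
      rw [← hu]
      clear hu
      induction u using TensorProduct.induction_on with
      | zero => simpa using Submodule.zero_mem _
      | tmul a b =>
        rw [TensorProduct.map_tmul]
        simp only [hψ, LinearMap.comp_apply, Submodule.coe_subtype,
          LinearMap.lTensor_tmul, TensorProduct.rid_tmul, LinearEquiv.coe_coe]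
        exact Submodule.smul_mem _ _ a.2
      | add u v hu hv => rw [map_add, map_add]; exact Submodule.add_mem _ hu hv
    have hφX : φ (Coalgebra.comul (R := k) X) = X := by
      simp [hφ]
    have hψX : ψ (Coalgebra.comul (R := k) X) = X := by
      simp [hψ]
    have hm0 : ((m, 0) : ℕ × ℕ) ∈ Finset.HasAntidiagonal.antidiagonal m := by simp
    have hXl : X = ∑ pq ∈ Finset.HasAntidiagonal.antidiagonal m, φ (t pq) := by
      rw [← hφX, hsum, map_sum]
    have hXr : X = ∑ pq ∈ Finset.HasAntidiagonal.antidiagonal m, ψ (t pq) := by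
      rw [← hψX, hsum, map_sum]
    have hkey : ∀ pq ∈ Finset.HasAntidiagonal.antidiagonal m, pq ≠ (m, 0) → pq.2 ≠ 0 := by
      intro pq hpq hne h2
      apply hne
      have := Finset.HasAntidiagonal.mem_antidiagonal.mp hpq
      rw [h2, add_zero] at this
      exact Prod.ext this h2
    -- project onto degree m to identify ψ (t (m,0)) with X
    have em : X = ψ (t (m, 0)) := by
      have e := congrArg (GradedRing.proj 𝒜 m) hXr
      rw [map_sum] at e
      rw [Finset.sum_eq_single_of_mem (m, 0) hm0] at e
      · rw [GradedRing.proj_apply, DirectSum.decompose_of_mem_same 𝒜 hX] at e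
        rw [e, GradedRing.proj_apply,
          DirectSum.decompose_of_mem_same 𝒜 (hψmem (m, 0) hm0)]
      · intro pq hpq hne
        have h1' : pq.1 ≠ m := by
          intro h
          apply hkey pq hpq hne
          have := Finset.HasAntidiagonal.mem_antidiagonal.mp hpq
          omega
        rw [GradedRing.proj_apply, DirectSum.decompose_of_mem_ne 𝒜 (hψmem pq hpq) h1']
    -- project onto degree 0 to show φ (t (m,0)) = 0
    have e0 : φ (t (m, 0)) = 0 := by
      have e := congrArg (GradedRing.proj 𝒜 0) hXl
      rw [map_sum] at e
      rw [Finset.sum_eq_single_of_mem (m, 0) hm0] at e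
      · rw [GradedRing.proj_apply, DirectSum.decompose_of_mem_ne 𝒜 hX hm.ne'] at e
        rw [← e.symm, GradedRing.proj_apply,
          DirectSum.decompose_of_mem_same 𝒜 (hφmem (m, 0) hm0)]
      · intro pq hpq hne
        rw [GradedRing.proj_apply,
          DirectSum.decompose_of_mem_ne 𝒜 (hφmem pq hpq) (hkey pq hpq hne)]
    -- t (m,0) is of the form w ⊗ₜ 1
    obtain ⟨u, hu⟩ := ht (m, 0) hm0
    have hw : ∃ w, t (m, 0) = w ⊗ₜ[k] (1 : H) := by
      rw [← hu]
      clear hu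
      induction u using TensorProduct.induction_on with
      | zero => exact ⟨0, by rw [map_zero, TensorProduct.zero_tmul]⟩
      | tmul a b =>
        obtain ⟨c, hc⟩ := Submodule.mem_span_singleton.mp (by rw [← hconn]; exact b.2)
        refine ⟨c • (a : H), ?_⟩
        rw [TensorProduct.map_tmul]
        simp only [Submodule.coe_subtype]
        rw [← hc, TensorProduct.smul_tmul, TensorProduct.tmul_smul]
      | add u v hu' hv' =>
        obtain ⟨w1, hw1⟩ := hu'
        obtain ⟨w2, hw2⟩ := hv'
        exact ⟨w1 + w2, by rw [map_add, hw1, hw2, TensorProduct.add_tmul]⟩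
    obtain ⟨w, hwt⟩ := hw
    have hψw : ψ (t (m, 0)) = w := by
      rw [hwt]
      simp [hψ]
    have hφw : φ (t (m, 0)) = Coalgebra.counit (R := k) w • (1 : H) := by
      rw [hwt]
      simp [hφ]
    have hXw : X = w := em.trans hψw
    rw [hφw] at e0
    rw [hXw]
    rcases smul_eq_zero.mp e0 with h | h
    · exact h
    · exact absurd h h1
  -- Step 2: rewrite the exponential sum
  rw [hlog m X hX, Finset.sum_range_succ']
  simp only [convPow_succ_eq τ hτ]
  rw [show convPow τ 0 X = Coalgebra.counit (R := k) X from rfl, hcounit]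
  simp
end

section
/- Multiplicativity of symmetry factors over connected components (commutative case): let H = k[φ(x_i) : i ∈ ℕ] with primitive generators, and let Ψ = Ψ_T · Ψ_V be a monomial that factors as a product of monomials with disjoint supports T and V. For any multiset Γ = {S_1,...,S_k} of monomials with supports contained in T and Γ' = {S'_1,...,S'_l} with supports in V, the coefficient of the symmetrized tensor [S_1|...|S_k|S'_1|...|S'_l] in G(Ψ) = Σ_m Δ̄^{[m]}(Ψ)/m! equals the product of the coefficient of [S_1|...|S_k] in G(Ψ_T) and the coefficient of [S'_1|...|S'_l] in G(Ψ_V). -/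
open TensorProduct MvPolynomial
open scoped Classical

set_option linter.unusedSectionVars false
set_option maxHeartbeats 1000000

namespace SymFactorAux

open List

variable {α : Type*} [DecidableEq α]


variable {α : Type*} [DecidableEq α]

lemma permutations'Aux_eq_map (x : α) (s : List α) :
    permutations'Aux x s = (List.range (s.length + 1)).map fun k => s.insertIdx k x := by
  apply List.ext_getElem (by simp)
  intro n h1 h2
  simp [List.getElem_permutations'Aux]

lemma insertIdx_eraseIdx_self (x : α) :
    ∀ (k : ℕ) (L : List α) (h : k < L.length), L[k] = x → (L.eraseIdx k).insertIdx k x = L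
  | 0, a :: t, _, h => by simp at h; simp [h]
  | k + 1, a :: t, hk, h => by
    simp only [List.eraseIdx_cons_succ, List.insertIdx_succ_cons]
    rw [insertIdx_eraseIdx_self x k t (by simpa using hk) (by simpa using h)]

lemma perm_insertIdx_cons (x : α) :
    ∀ (k : ℕ) (M : List α), k ≤ M.length → M.insertIdx k x ~ x :: M
  | 0, M, _ => by simp
  | k + 1, a :: M, hk => by
    simp only [List.insertIdx_succ_cons]
    exact (Perm.cons a (perm_insertIdx_cons x k M (by simpa using hk))).trans
      (Perm.swap x a M)

lemma insertIdx_eq_iff' (x : α) (k : ℕ) (M L : List α) (hk : k ≤ M.length) :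
    M.insertIdx k x = L ↔
      ∃ h : k < L.length, L[k] = x ∧ M = L.eraseIdx k := by
  constructor
  · rintro rfl
    refine ⟨?_, ?_, ?_⟩
    · rw [List.length_insertIdx_of_le_length hk]; omega
    · exact List.getElem_insertIdx_self _
    · rw [List.eraseIdx_insertIdx_self]
  · rintro ⟨h, hx, rfl⟩
    exact insertIdx_eraseIdx_self x k L h hx

lemma count_eq_sum_range (x : α) (L : List α) :
    L.count x = ∑ k ∈ Finset.range L.length, if L[k]? = some x then 1 else 0 := by
  induction L with
  | nil => simp
  | cons a t ih =>
      rw [List.length_cons, Finset.sum_range_succ']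
      simp only [List.getElem?_cons_succ, List.getElem?_cons_zero]
      rw [← ih, List.count_cons]
      by_cases h : a = x <;> simp [h, add_comm]

lemma list_sum_map_finset_sum {β γ : Type*} (L : List β) (s : Finset γ) (F : β → γ → ℕ) :
    (L.map fun M => ∑ k ∈ s, F M k).sum = ∑ k ∈ s, (L.map fun M => F M k).sum := by
  induction L with
  | nil => simp
  | cons a t ih => simp [ih, Finset.sum_add_distrib]

section BEqLemmas

variable {β : Type*} [BEq β] [LawfulBEq β]

lemma count_eq_sum_map' (c : β) [DecidableEq β] (L : List β) :
    L.count c = (L.map fun M => if M = c then 1 else 0).sum := by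
  induction L with
  | nil => simp
  | cons a t ih =>
      rw [List.count_cons, ih, List.map_cons, List.sum_cons]
      by_cases h : a = c <;> simp [h, add_comm]

lemma count_map_range' [DecidableEq β] (f : ℕ → β) (m : ℕ) (c : β) :
    ((List.range m).map f).count c = ∑ k ∈ Finset.range m, if f k = c then 1 else 0 := by
  induction m with
  | zero => simp
  | succ m ih =>
      rw [List.range_succ, Finset.sum_range_succ, ← ih, List.map_append, List.count_append]
      by_cases h : f m = c
      · simp [h]
      · have h0 : count c [f m] = 0 := by
          rw [List.count_eq_zero]
          simp only [List.mem_singleton]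
          exact fun hc => h hc.symm
        simp [h0, h]

lemma perm_count_eq' {l₁ l₂ : List β} (h : l₁ ~ l₂) (a : β) : l₁.count a = l₂.count a := by
  rw [List.count_eq_countP, List.count_eq_countP]
  exact h.countP_eq _

end BEqLemmas

lemma prod_factorial_count_cons (x : α) (l : List α) :
    ∏ a ∈ (x :: l).toFinset, ((x :: l).count a).factorial
      = (x :: l).count x * ∏ a ∈ l.toFinset, (l.count a).factorial := by
  rw [List.toFinset_cons]
  by_cases hx : x ∈ l.toFinset
  · rw [Finset.insert_eq_self.2 hx]
    rw [← Finset.mul_prod_erase l.toFinset (fun a => ((x :: l).count a).factorial) hx,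
      ← Finset.mul_prod_erase l.toFinset (fun a => (l.count a).factorial) hx,
      List.count_cons_self, Nat.factorial_succ, mul_assoc]
    congr 1
    congr 1
    apply Finset.prod_congr rfl
    intro a ha
    rw [List.count_cons_of_ne (Finset.ne_of_mem_erase ha).symm]
  · rw [Finset.prod_insert hx, List.count_cons_self]
    have hxl : l.count x = 0 := by
      simp only [List.mem_toFinset] at hx
      exact List.count_eq_zero.2 hx
    rw [hxl]
    simp only [Nat.zero_add, Nat.factorial_one, one_mul]
    apply Finset.prod_congr rfl
    intro a ha
    have : a ≠ x := by rintro rfl; exact hx ha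
    rw [List.count_cons_of_ne this.symm]

theorem count_self_permutations' (L : List α) :
    L.permutations'.count L = ∏ a ∈ L.toFinset, (L.count a).factorial := by
  generalize hn : L.length = n
  induction n using Nat.strong_induction_on generalizing L with
  | _ n ih =>
    match L with
    | [] => simp [List.permutations']
    | x :: l =>
      set K := ∏ a ∈ l.toFinset, (l.count a).factorial with hK
      rw [List.permutations', List.count_flatMap]
      have hmapcongr : ∀ M ∈ l.permutations', (List.count (x :: l) ∘ permutations'Aux x) M =
          ∑ k ∈ Finset.range (l.length + 1),
            if (x :: l)[k]? = some x then
              (if M = (x :: l).eraseIdx k then 1 else 0) else 0 := by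
        intro M hM
        have hMl : M.length = l.length := (List.mem_permutations'.1 hM).length_eq
        simp only [Function.comp_apply]
        rw [permutations'Aux_eq_map, count_map_range', hMl]
        apply Finset.sum_congr rfl
        intro k hk
        have hkM : k ≤ M.length := by rw [hMl]; exact Nat.lt_succ_iff.1 (Finset.mem_range.1 hk)
        have hiff := insertIdx_eq_iff' x k M (x :: l) hkM
        by_cases hins : M.insertIdx k x = x :: l
        · obtain ⟨h1, h2, h3⟩ := hiff.1 hins
          rw [if_pos hins, if_pos (by rw [List.getElem?_eq_getElem h1, h2]),
            if_pos h3]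
        · rw [if_neg hins]
          by_cases hsome : (x :: l)[k]? = some x
          · rw [if_pos hsome]
            by_cases h3 : M = (x :: l).eraseIdx k
            · exfalso
              obtain ⟨hvlt, hveq⟩ := List.getElem?_eq_some_iff.1 hsome
              exact hins (hiff.2 ⟨hvlt, hveq, h3⟩)
            · rw [if_neg h3]
          · rw [if_neg hsome]
      rw [List.map_congr_left hmapcongr, list_sum_map_finset_sum]
      have hinner : ∀ k ∈ Finset.range (l.length + 1),
          (l.permutations'.map fun M =>
            if (x :: l)[k]? = some x then
              (if M = (x :: l).eraseIdx k then 1 else 0) else 0).sum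
          = (if (x :: l)[k]? = some x then 1 else 0) * K := by
        intro k hk
        by_cases hsome : (x :: l)[k]? = some x
        · simp only [if_pos hsome, one_mul]
          rw [← count_eq_sum_map']
          set Mk := (x :: l).eraseIdx k with hMk
          obtain ⟨hvlt, hveq⟩ := List.getElem?_eq_some_iff.1 hsome
          have hins : Mk.insertIdx k x = x :: l :=
            insertIdx_eraseIdx_self x k (x :: l) hvlt hveq
          have hlenMk : Mk.length = l.length := by
            rw [hMk, List.length_eraseIdx_of_lt hvlt]; simp
          have hperm : Mk ~ l := by
            have h1 : Mk.insertIdx k x ~ x :: Mk := by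
              apply perm_insertIdx_cons
              have hvlt' : k < l.length + 1 := by simpa using hvlt
              omega
            have h2 : (x :: l : List α) ~ x :: Mk := hins ▸ h1
            exact (h2.cons_inv).symm
          have e1 : l.permutations'.count Mk = Mk.permutations'.count Mk :=
            perm_count_eq' (Perm.permutations' hperm.symm) Mk
          rw [e1, ih Mk.length (by rw [hperm.length_eq]; simp at hn; omega) Mk rfl]
          rw [hK]
          have htf : Mk.toFinset = l.toFinset := by
            ext a; simp [List.mem_toFinset, hperm.mem_iff]
          rw [Finset.prod_congr htf fun a _ => by rw [hperm.count_eq]]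
        · simp only [if_neg hsome, zero_mul]
          apply List.sum_eq_zero
          intro y hy
          simp only [List.mem_map] at hy
          obtain ⟨M, _, rfl⟩ := hy
          rfl
      rw [Finset.sum_congr rfl hinner, ← Finset.sum_mul]
      have hlc : (x :: l).length = l.length + 1 := rfl
      rw [← hlc, ← count_eq_sum_range, prod_factorial_count_cons]

/-- The stabilizer count equals the product of factorials of multiplicities. -/
theorem stabCard_eq_prod (L : List α) :
    (L.permutations.filter (· = L)).length = ∏ a ∈ L.toFinset, (L.count a).factorial := by
  have h1 : (L.permutations.filter (· = L)).length = L.permutations.count L := by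
    rw [List.count_eq_countP, List.countP_eq_length_filter]
    congr 1
    apply List.filter_congr
    intro M _
    by_cases h : M = L <;> simp [h]
  rw [h1, perm_count_eq' (List.permutations_perm_permutations' L) L,
    count_self_permutations']


end SymFactorAux

/-- The coproduct on the polynomial Hopf algebra `ℚ[φ(x_0), φ(x_1), …]` making each
generator `X i` primitive: `Δ(X i) = X i ⊗ 1 + 1 ⊗ X i`. -/
noncomputable def polyComul :
    MvPolynomial ℕ ℚ →ₐ[ℚ] MvPolynomial ℕ ℚ ⊗[ℚ] MvPolynomial ℕ ℚ :=
  MvPolynomial.aeval fun i => X i ⊗ₜ[ℚ] (1 : MvPolynomial ℕ ℚ) + 1 ⊗ₜ[ℚ] X i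

/-- The reduced coproduct `Δ̄(x) = Δ(x) - x ⊗ 1 - 1 ⊗ x`. -/
noncomputable def polyRedComul :
    MvPolynomial ℕ ℚ →ₗ[ℚ] MvPolynomial ℕ ℚ ⊗[ℚ] MvPolynomial ℕ ℚ :=
  polyComul.toLinearMap -
    ((TensorProduct.mk ℚ (MvPolynomial ℕ ℚ) (MvPolynomial ℕ ℚ)).flip 1 +
      TensorProduct.mk ℚ (MvPolynomial ℕ ℚ) (MvPolynomial ℕ ℚ) 1)

/-- the product of binomial coefficients `∏ (e i).choose (d i)` -/
noncomputable def cbin (e d : ℕ →₀ ℕ) : ℕ := ∏ i ∈ e.support, (e i).choose (d i)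

lemma comul_X_pow (a : ℕ) (n : ℕ) :
    polyComul (monomial (Finsupp.single a n) 1) =
      ∑ k ∈ Finset.range (n + 1), (n.choose k : ℚ) •
        (monomial (Finsupp.single a k) 1 ⊗ₜ[ℚ] monomial (Finsupp.single a (n - k)) 1) := by
  rw [← MvPolynomial.X_pow_eq_monomial, map_pow]
  have hX : polyComul (X a) = X a ⊗ₜ[ℚ] 1 + 1 ⊗ₜ[ℚ] X a := by
    simp [polyComul]
  rw [hX, add_pow]
  apply Finset.sum_congr rfl
  intro k hk
  rw [Algebra.TensorProduct.tmul_pow, Algebra.TensorProduct.tmul_pow,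
    Algebra.TensorProduct.tmul_mul_tmul, one_pow, one_pow, mul_one, one_mul]
  rw [MvPolynomial.X_pow_eq_monomial, MvPolynomial.X_pow_eq_monomial]
  rw [mul_comm, ← nsmul_eq_mul, ← Nat.cast_smul_eq_nsmul ℚ]

lemma comul_monomial (e : ℕ →₀ ℕ) :
    polyComul (monomial e 1) =
      ∑ p ∈ Finset.HasAntidiagonal.antidiagonal e, (cbin e p.1 : ℚ) •
        (monomial p.1 1 ⊗ₜ[ℚ] monomial p.2 1) := by
  induction e using Finsupp.induction with
  | zero =>
      rw [Finsupp.antidiagonal_zero]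
      simp only [Finset.sum_singleton, cbin]
      simp [MvPolynomial.monomial_zero', Algebra.TensorProduct.one_def]
  | single_add a n f ha hn ih =>
      have key : monomial (Finsupp.single a n + f) (1 : ℚ) =
          monomial (Finsupp.single a n) 1 * monomial f 1 := by
        rw [MvPolynomial.monomial_mul, one_mul]
      rw [key, map_mul, comul_X_pow, ih, Finset.sum_mul_sum]
      rw [← Finset.sum_product']
      have hsuppe : (Finsupp.single a n + f).support = insert a f.support := by
        rw [Finsupp.support_add_eq, Finsupp.support_single_ne_zero a hn]
        · rfl
        · rw [Finsupp.support_single_ne_zero a hn]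
          simpa using ha
      apply Finset.sum_nbij'
        (i := fun (q : ℕ × ((ℕ →₀ ℕ) × (ℕ →₀ ℕ))) =>
          (Finsupp.single a q.1 + q.2.1, Finsupp.single a (n - q.1) + q.2.2))
        (j := fun (p : (ℕ →₀ ℕ) × (ℕ →₀ ℕ)) => (p.1 a, (p.1.erase a, p.2.erase a)))
      · rintro ⟨k, p₁, p₂⟩ hq
        simp only [Finset.mem_product, Finset.mem_range, Finset.HasAntidiagonal.mem_antidiagonal] at hq
        obtain ⟨hk, hp⟩ := hq
        rw [Finset.HasAntidiagonal.mem_antidiagonal]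
        have : Finsupp.single a k + Finsupp.single a (n - k) = Finsupp.single a n := by
          rw [← Finsupp.single_add]
          congr 1
          omega
        calc Finsupp.single a k + p₁ + (Finsupp.single a (n - k) + p₂)
            = (Finsupp.single a k + Finsupp.single a (n - k)) + (p₁ + p₂) := by
              rw [add_add_add_comm]
          _ = Finsupp.single a n + f := by rw [this, hp]
      · rintro ⟨q₁, q₂⟩ hq
        rw [Finset.HasAntidiagonal.mem_antidiagonal] at hq
        simp only [Finset.mem_product, Finset.mem_range, Finset.HasAntidiagonal.mem_antidiagonal]
        have happ : q₁ a + q₂ a = n := by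
          have := congrArg (fun g => g a) hq
          simpa [Finsupp.notMem_support_iff.1 ha] using this
        constructor
        · omega
        · have := congrArg (Finsupp.erase a) hq
          rw [Finsupp.erase_add, Finsupp.erase_add, Finsupp.erase_single,
            Finsupp.erase_of_notMem_support ha, zero_add] at this
          exact this
      · rintro ⟨k, p₁, p₂⟩ hq
        simp only [Finset.mem_product, Finset.mem_range, Finset.HasAntidiagonal.mem_antidiagonal] at hq
        obtain ⟨hk, hp⟩ := hq
        have hp1a : p₁ a = 0 := by
          have := congrArg (fun g => g a) hp
          simp only [Finsupp.add_apply] at this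
          have hfa : f a = 0 := Finsupp.notMem_support_iff.1 ha
          omega
        have hp2a : p₂ a = 0 := by
          have := congrArg (fun g => g a) hp
          simp only [Finsupp.add_apply] at this
          have hfa : f a = 0 := Finsupp.notMem_support_iff.1 ha
          omega
        have e1 : (Finsupp.single a k + p₁) a = k := by
          simp [Finsupp.add_apply, hp1a]
        have e2 : (Finsupp.single a k + p₁).erase a = p₁ := by
          rw [Finsupp.erase_add, Finsupp.erase_single, zero_add,
            Finsupp.erase_of_notMem_support (Finsupp.notMem_support_iff.2 hp1a)]
        have e3 : (Finsupp.single a (n - k) + p₂).erase a = p₂ := by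
          rw [Finsupp.erase_add, Finsupp.erase_single, zero_add,
            Finsupp.erase_of_notMem_support (Finsupp.notMem_support_iff.2 hp2a)]
        exact Prod.ext e1 (Prod.ext e2 e3)
      · rintro ⟨q₁, q₂⟩ hq
        rw [Finset.HasAntidiagonal.mem_antidiagonal] at hq
        have happ : q₁ a + q₂ a = n := by
          have := congrArg (fun g => g a) hq
          simpa [Finsupp.notMem_support_iff.1 ha] using this
        have e2 : n - q₁ a = q₂ a := by omega
        simp only [e2]
        rw [Finsupp.single_add_erase, Finsupp.single_add_erase]
      · rintro ⟨k, p₁, p₂⟩ hq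
        simp only [Finset.mem_product, Finset.mem_range, Finset.HasAntidiagonal.mem_antidiagonal] at hq
        obtain ⟨hk, hp⟩ := hq
        have hp1a : p₁ a = 0 := by
          have := congrArg (fun g => g a) hp
          simp only [Finsupp.add_apply] at this
          have hfa : f a = 0 := Finsupp.notMem_support_iff.1 ha
          omega
        -- coefficient identity and tensor term
        rw [smul_mul_smul_comm, Algebra.TensorProduct.tmul_mul_tmul,
          MvPolynomial.monomial_mul, MvPolynomial.monomial_mul, one_mul]
        have hcbin : cbin (Finsupp.single a n + f) (Finsupp.single a k + p₁)
            = n.choose k * cbin f p₁ := by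
          rw [cbin, hsuppe, Finset.prod_insert ha]
          have hea : (Finsupp.single a n + f) a = n := by
            simp [Finsupp.add_apply, Finsupp.notMem_support_iff.1 ha]
          have hda : (Finsupp.single a k + p₁) a = k := by
            simp [Finsupp.add_apply, hp1a]
          rw [hea, hda, cbin]
          congr 1
          apply Finset.prod_congr rfl
          intro i hi
          have hia : i ≠ a := by rintro rfl; exact ha hi
          simp [Finsupp.add_apply, Finsupp.single_apply, hia, Ne.symm hia]
        rw [hcbin]
        push_cast
        ring_nf

lemma cbin_zero_right (e : ℕ →₀ ℕ) : cbin e 0 = 1 := by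
  rw [cbin]
  apply Finset.prod_eq_one
  intro i _
  simp

lemma cbin_self (e : ℕ →₀ ℕ) : cbin e e = 1 := by
  rw [cbin]
  apply Finset.prod_eq_one
  intro i _
  simp

lemma redComul_monomial (e : ℕ →₀ ℕ) (he : e ≠ 0) :
    polyRedComul (monomial e 1) =
      ∑ p ∈ (Finset.HasAntidiagonal.antidiagonal e).filter (fun p => p.1 ≠ 0 ∧ p.2 ≠ 0),
        (cbin e p.1 : ℚ) • (monomial p.1 1 ⊗ₜ[ℚ] monomial p.2 1) := by
  have hsplit := Finset.sum_filter_add_sum_filter_not (Finset.HasAntidiagonal.antidiagonal e)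
      (fun p => p.1 ≠ 0 ∧ p.2 ≠ 0)
      (fun p => (cbin e p.1 : ℚ) • (monomial p.1 (1:ℚ) ⊗ₜ[ℚ] monomial p.2 (1:ℚ)))
  have hcompl : (Finset.HasAntidiagonal.antidiagonal e).filter (fun p => ¬(p.1 ≠ 0 ∧ p.2 ≠ 0))
      = {((0 : ℕ →₀ ℕ), e), (e, (0 : ℕ →₀ ℕ))} := by
    ext p
    simp only [Finset.mem_filter, Finset.HasAntidiagonal.mem_antidiagonal, Finset.mem_insert,
      Finset.mem_singleton, not_and_or, not_not]
    constructor
    · rintro ⟨hsum, h0 | h0⟩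
      · left
        rw [Prod.ext_iff]
        exact ⟨h0, by rw [← hsum, h0, zero_add]⟩
      · right
        rw [Prod.ext_iff]
        exact ⟨by rw [← hsum, h0, add_zero], h0⟩
    · rintro (rfl | rfl)
      · exact ⟨by simp, Or.inl rfl⟩
      · exact ⟨by simp, Or.inr rfl⟩
  have hne : ((0 : ℕ →₀ ℕ), e) ≠ (e, (0 : ℕ →₀ ℕ)) := by
    intro h
    rw [Prod.ext_iff] at h
    exact he h.1.symm
  have hcomplsum : ∑ p ∈ (Finset.HasAntidiagonal.antidiagonal e).filter (fun p => ¬(p.1 ≠ 0 ∧ p.2 ≠ 0)),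
      (cbin e p.1 : ℚ) • (monomial p.1 (1:ℚ) ⊗ₜ[ℚ] monomial p.2 (1:ℚ))
      = (1 : MvPolynomial ℕ ℚ) ⊗ₜ[ℚ] monomial e (1:ℚ) + monomial e (1:ℚ) ⊗ₜ[ℚ] 1 := by
    rw [hcompl, Finset.sum_insert (by simpa using hne), Finset.sum_singleton]
    rw [cbin_zero_right, cbin_self]
    simp [MvPolynomial.monomial_zero']
  have hred : polyRedComul (monomial e 1) = polyComul (monomial e 1)
      - (monomial e 1 ⊗ₜ[ℚ] 1 + 1 ⊗ₜ[ℚ] monomial e 1) := by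
    simp [polyRedComul, LinearMap.sub_apply, LinearMap.add_apply,
      TensorProduct.mk_apply, LinearMap.flip_apply]
  rw [hred, comul_monomial, ← hsplit, hcomplsum]
  abel

/-- `wfac d = ∏ i (d i)!` as a rational number. -/
noncomputable def wfac (d : ℕ →₀ ℕ) : ℚ := ∏ i ∈ d.support, ((d i).factorial : ℚ)

lemma wfac_pos (d : ℕ →₀ ℕ) : 0 < wfac d := by
  apply Finset.prod_pos
  intro i _
  exact_mod_cast (d i).factorial_pos

lemma wfac_ne_zero (d : ℕ →₀ ℕ) : wfac d ≠ 0 := ne_of_gt (wfac_pos d)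

lemma wfac_eq_prod {d : ℕ →₀ ℕ} {s : Finset ℕ} (h : d.support ⊆ s) :
    wfac d = ∏ i ∈ s, ((d i).factorial : ℚ) := by
  rw [wfac]
  apply Finset.prod_subset h
  intro i _ hi
  rw [Finsupp.notMem_support_iff.1 hi]
  simp

lemma cbin_eq_div {e d : ℕ →₀ ℕ} (hde : d ≤ e) :
    (cbin e d : ℚ) = wfac e / (wfac d * wfac (e - d)) := by
  have hd : d.support ⊆ e.support := Finsupp.support_mono hde
  have hed : (e - d).support ⊆ e.support := by
    intro i hi
    rw [Finsupp.mem_support_iff] at hi ⊢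
    rw [Finsupp.tsub_apply] at hi
    omega
  rw [wfac_eq_prod hd, wfac_eq_prod hed, eq_div_iff (by
    refine mul_ne_zero ?_ ?_ <;>
      · apply Finset.prod_ne_zero_iff.2
        intro i _
        exact_mod_cast (Nat.factorial_pos _).ne')]
  rw [cbin, Nat.cast_prod, ← Finset.prod_mul_distrib, ← Finset.prod_mul_distrib, wfac]
  apply Finset.prod_congr rfl
  intro i _
  have hle : d i ≤ e i := hde i
  rw [Finsupp.tsub_apply]
  norm_cast
  rw [← mul_assoc]
  exact Nat.choose_mul_factorial_mul_factorial hle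


/-- For a list `L = [d_1, …, d_m]` of exponent vectors (encoding the monomials
`S_1, …, S_m`), `tensorCoeff L` is the linear form
`(coeff d_1 ⊗ ⋯ ⊗ coeff d_m) ∘ Δ̄^{[m]}` extracting the coefficient of the plain
tensor `S_1 ⊗ ⋯ ⊗ S_m` in the `m`-fold iterated reduced coproduct. -/
noncomputable def tensorCoeff : List (ℕ →₀ ℕ) → (MvPolynomial ℕ ℚ →ₗ[ℚ] ℚ)
  | [] => 0
  | [d] => lcoeff ℚ d
  | d :: e :: L =>
    LinearMap.mul' ℚ ℚ ∘ₗ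
      TensorProduct.map (lcoeff ℚ d) (tensorCoeff (e :: L)) ∘ₗ polyRedComul


lemma tensorCoeff_single_monomial (d e : ℕ →₀ ℕ) :
    tensorCoeff [d] (monomial e (1:ℚ)) = if e = d then 1 else 0 := by
  show lcoeff ℚ d (monomial e (1:ℚ)) = _
  rw [lcoeff_apply, coeff_monomial]

lemma tensorCoeff_cons_monomial (d d₂ : ℕ →₀ ℕ) (L : List (ℕ →₀ ℕ)) (e : ℕ →₀ ℕ)
    (he : e ≠ 0) :
    tensorCoeff (d :: d₂ :: L) (monomial e (1:ℚ)) =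
      if d ≠ 0 ∧ d ≤ e ∧ d ≠ e then
        (cbin e d : ℚ) * tensorCoeff (d₂ :: L) (monomial (e - d) (1:ℚ))
      else 0 := by
  show (LinearMap.mul' ℚ ℚ ∘ₗ
      TensorProduct.map (lcoeff ℚ d) (tensorCoeff (d₂ :: L)) ∘ₗ polyRedComul)
      (monomial e (1:ℚ)) = _
  rw [LinearMap.comp_apply, LinearMap.comp_apply, redComul_monomial e he, map_sum, map_sum]
  have hterms : ∀ p ∈ (Finset.HasAntidiagonal.antidiagonal e).filter (fun p => p.1 ≠ 0 ∧ p.2 ≠ 0),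
      (LinearMap.mul' ℚ ℚ) (TensorProduct.map (lcoeff ℚ d) (tensorCoeff (d₂ :: L))
        ((cbin e p.1 : ℚ) • (monomial p.1 (1:ℚ) ⊗ₜ[ℚ] monomial p.2 (1:ℚ))))
      = if p.1 = d then (cbin e p.1 : ℚ) * tensorCoeff (d₂ :: L) (monomial p.2 (1:ℚ))
        else 0 := by
    intro p _
    rw [map_smul, TensorProduct.map_tmul, map_smul, LinearMap.mul'_apply]
    rw [lcoeff_apply, coeff_monomial]
    by_cases h : p.1 = d
    · rw [if_pos h, if_pos h, smul_eq_mul, one_mul]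
    · rw [if_neg h, if_neg h, zero_mul, smul_zero]
  rw [Finset.sum_congr rfl hterms]
  by_cases hcond : d ≠ 0 ∧ d ≤ e ∧ d ≠ e
  · rw [if_pos hcond]
    obtain ⟨hd0, hde, hdne⟩ := hcond
    have hmem : (d, e - d) ∈ (Finset.HasAntidiagonal.antidiagonal e).filter (fun p => p.1 ≠ 0 ∧ p.2 ≠ 0) := by
      rw [Finset.mem_filter, Finset.HasAntidiagonal.mem_antidiagonal]
      refine ⟨add_tsub_cancel_of_le hde, hd0, ?_⟩
      intro h0
      exact hdne (le_antisymm hde (tsub_eq_zero_iff_le.1 h0))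
    rw [Finset.sum_eq_single_of_mem (d, e - d) hmem]
    · rw [if_pos rfl]
    · rintro ⟨q₁, q₂⟩ hq hne
      rw [Finset.mem_filter, Finset.HasAntidiagonal.mem_antidiagonal] at hq
      by_cases h : q₁ = d
      · exfalso
        apply hne
        have : q₂ = e - d := by
          subst h
          exact eq_tsub_of_add_eq (by rw [add_comm]; exact hq.1)
        rw [h, this]
      · rw [if_neg h]
  · rw [if_neg hcond]
    apply Finset.sum_eq_zero
    rintro ⟨q₁, q₂⟩ hq
    rw [Finset.mem_filter, Finset.HasAntidiagonal.mem_antidiagonal] at hq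
    obtain ⟨hsum, h1, h2⟩ := hq
    by_cases h : q₁ = d
    · exfalso
      subst h
      apply hcond
      refine ⟨h1, ?_, ?_⟩
      · rw [← hsum]; exact self_le_add_right _ _
      · intro hde
        apply h2
        have : q₁ + q₂ = q₁ + 0 := by rw [add_zero, hsum, hde]
        exact add_left_cancel this
    · rw [if_neg h]

lemma sum_ne_zero_of_ne_zero {L : List (ℕ →₀ ℕ)} (hne : L ≠ [])
    (hnz : ∀ d ∈ L, d ≠ 0) : L.sum ≠ 0 := by
  match L with
  | d :: L' =>
    rw [List.sum_cons]
    intro h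
    rw [add_eq_zero] at h
    exact hnz d (by simp) h.1

lemma prod_map_wfac_ne_zero (L : List (ℕ →₀ ℕ)) : (L.map wfac).prod ≠ 0 := by
  induction L with
  | nil => simp
  | cons d L ih =>
      rw [List.map_cons, List.prod_cons]
      exact mul_ne_zero (wfac_ne_zero d) ih

theorem tensorCoeff_monomial_eq : ∀ (L : List (ℕ →₀ ℕ)), L ≠ [] → (∀ d ∈ L, d ≠ 0) →
    ∀ e : ℕ →₀ ℕ, tensorCoeff L (monomial e (1:ℚ))
      = if L.sum = e then wfac e / (L.map wfac).prod else 0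
  | [], hne, _, _ => absurd rfl hne
  | [d], _, hnz, e => by
      rw [tensorCoeff_single_monomial]
      simp only [List.sum_cons, List.sum_nil, add_zero, List.map_cons, List.map_nil,
        List.prod_cons, List.prod_nil, mul_one]
      by_cases h : d = e
      · subst h
        rw [if_pos rfl, if_pos rfl, div_self (wfac_ne_zero d)]
      · rw [if_neg (fun hh => h hh.symm), if_neg h]
  | d :: d₂ :: L, _, hnz, e => by
      have hd : d ≠ 0 := hnz d (by simp)
      have hrestnz : ∀ x ∈ d₂ :: L, x ≠ 0 := fun x hx => hnz x (by simp [hx])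
      by_cases he : e = 0
      · subst he
        have hsum0 : (d :: d₂ :: L).sum ≠ 0 :=
          sum_ne_zero_of_ne_zero (by simp) hnz
        rw [if_neg hsum0]
        have h1 : polyRedComul (monomial (0 : ℕ →₀ ℕ) (1:ℚ)) = - ((1:MvPolynomial ℕ ℚ) ⊗ₜ[ℚ] 1) := by
          rw [MvPolynomial.monomial_zero']
          simp only [polyRedComul, LinearMap.sub_apply, LinearMap.add_apply,
            AlgHom.toLinearMap_apply, map_one, TensorProduct.mk_apply, LinearMap.flip_apply]
          rw [Algebra.TensorProduct.one_def]
          abel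
        show (LinearMap.mul' ℚ ℚ ∘ₗ
            TensorProduct.map (lcoeff ℚ d) (tensorCoeff (d₂ :: L)) ∘ₗ polyRedComul)
            (monomial 0 (1:ℚ)) = 0
        rw [LinearMap.comp_apply, LinearMap.comp_apply, h1, map_neg, map_neg,
          TensorProduct.map_tmul, LinearMap.mul'_apply, lcoeff_apply,
          MvPolynomial.coeff_one, if_neg (fun hh => hd hh.symm), zero_mul, neg_zero]
      · rw [tensorCoeff_cons_monomial d d₂ L e he]
        by_cases hcond : d ≠ 0 ∧ d ≤ e ∧ d ≠ e
        · rw [if_pos hcond]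
          rw [tensorCoeff_monomial_eq (d₂ :: L) (by simp) hrestnz (e - d)]
          by_cases hsum : (d₂ :: L).sum = e - d
          · rw [if_pos hsum, if_pos (by
              rw [List.sum_cons, hsum, add_tsub_cancel_of_le hcond.2.1])]
            have h1 : wfac d ≠ 0 := wfac_ne_zero d
            have h2 : wfac (e - d) ≠ 0 := wfac_ne_zero (e - d)
            have h3 : (List.map wfac (d₂ :: L)).prod ≠ 0 := prod_map_wfac_ne_zero _
            rw [cbin_eq_div hcond.2.1, List.map_cons, List.prod_cons]
            rw [div_mul_div_comm, mul_right_comm (wfac d) (wfac (e - d)),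
              mul_div_mul_right _ _ h2, List.map_cons, List.prod_cons, List.map_cons,
              List.prod_cons]
          · rw [if_neg hsum, mul_zero, if_neg (by
              intro hh
              apply hsum
              rw [List.sum_cons] at hh
              exact eq_tsub_of_add_eq (by rw [add_comm]; exact hh))]
        · rw [if_neg hcond, if_neg (by
            intro hh
            apply hcond
            rw [List.sum_cons] at hh
            refine ⟨hd, ?_, ?_⟩
            · rw [← hh]; exact self_le_add_right _ _
            · intro hde
              have hz : (d₂ :: L).sum = 0 := by
                apply add_left_cancel (a := d)
                rw [add_zero, hh, hde]
              exact sum_ne_zero_of_ne_zero (by simp) hrestnz hz)]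

/-- The size of the stabilizer of the list `L` under permutations, i.e. the number
of permutations of `L` (with multiplicity) equal to `L`. -/
noncomputable def stabCard (L : List (ℕ →₀ ℕ)) : ℕ :=
  (L.permutations.filter (· = L)).length


lemma stabCard_eq (L : List (ℕ →₀ ℕ)) :
    stabCard L = ∏ a ∈ L.toFinset, (L.count a).factorial := by
  unfold stabCard
  exact SymFactorAux.stabCard_eq_prod L

lemma stabCard_append {L₁ L₂ : List (ℕ →₀ ℕ)} (h : ∀ a ∈ L₁, a ∉ L₂) :
    stabCard (L₁ ++ L₂) = stabCard L₁ * stabCard L₂ := by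
  have hd : Disjoint L₁.toFinset L₂.toFinset := by
    rw [Finset.disjoint_left]
    intro a ha hb
    rw [List.mem_toFinset] at ha hb
    exact h a ha hb
  rw [stabCard_eq, stabCard_eq, stabCard_eq, List.toFinset_append, Finset.prod_union hd]
  congr 1
  · apply Finset.prod_congr rfl
    intro a ha
    rw [List.count_append,
      List.count_eq_zero_of_not_mem (h a (List.mem_toFinset.1 ha)), add_zero]
  · apply Finset.prod_congr rfl
    intro a ha
    have ha2 : a ∉ L₁ := fun h1 => h a h1 (List.mem_toFinset.1 ha)
    rw [List.count_append, List.count_eq_zero_of_not_mem ha2, zero_add]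

lemma support_list_sum {L : List (ℕ →₀ ℕ)} {s : Finset ℕ} (h : ∀ d ∈ L, d.support ⊆ s) :
    L.sum.support ⊆ s := by
  induction L with
  | nil => simp
  | cons a t ih =>
      rw [List.sum_cons]
      refine Finsupp.support_add.trans ?_
      exact Finset.union_subset (h a (by simp)) (ih fun d hd => h d (by simp [hd]))

lemma wfac_add_disjoint {e₁ e₂ : ℕ →₀ ℕ} (h : Disjoint e₁.support e₂.support) :
    wfac (e₁ + e₂) = wfac e₁ * wfac e₂ := by
  rw [wfac, wfac, wfac, Finsupp.support_add_eq h, Finset.prod_union h]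
  congr 1
  · apply Finset.prod_congr rfl
    intro i hi
    rw [Finsupp.add_apply, Finsupp.notMem_support_iff.1 (Finset.disjoint_left.1 h hi),
      add_zero]
  · apply Finset.prod_congr rfl
    intro i hi
    rw [Finsupp.add_apply, Finsupp.notMem_support_iff.1 (Finset.disjoint_right.1 h hi),
      zero_add]

lemma sum_split {e₁ e₂ s₁ s₂ : ℕ →₀ ℕ} (hdisj : Disjoint e₁.support e₂.support)
    (h₁ : s₁.support ⊆ e₁.support) (h₂ : s₂.support ⊆ e₂.support)
    (h : s₁ + s₂ = e₁ + e₂) : s₁ = e₁ ∧ s₂ = e₂ := by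
  have key : ∀ i, s₁ i = e₁ i ∧ s₂ i = e₂ i := by
    intro i
    have happ : s₁ i + s₂ i = e₁ i + e₂ i := by
      have := congrArg (fun g : ℕ →₀ ℕ => g i) h
      simpa [Finsupp.add_apply] using this
    by_cases hi : i ∈ e₁.support
    · have he2 : e₂ i = 0 := Finsupp.notMem_support_iff.1 (Finset.disjoint_left.1 hdisj hi)
      have hs2 : s₂ i = 0 := Finsupp.notMem_support_iff.1
        (fun hc => Finset.disjoint_left.1 hdisj hi (h₂ hc))
      omega
    · have he1 : e₁ i = 0 := Finsupp.notMem_support_iff.1 hi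
      have hs1 : s₁ i = 0 := Finsupp.notMem_support_iff.1 (fun hc => hi (h₁ hc))
      omega
  exact ⟨Finsupp.ext fun i => (key i).1, Finsupp.ext fun i => (key i).2⟩


/-- The symmetry factor `s_Γ^Ψ`: the coefficient of the symmetrized tensor
`[S_1|…|S_m]` in the graphication `G(Ψ) = Σ_m Δ̄^{[m]}(Ψ)/m!`. Since `G(Ψ)` is a
symmetric tensor, this equals `m!/|Stab Γ|` times the coefficient of the plain
tensor `S_1 ⊗ ⋯ ⊗ S_m` in `Δ̄^{[m]}(Ψ)/m!`, i.e. `tensorCoeff Γ Ψ / |Stab Γ|`. -/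
noncomputable def symFactor (L : List (ℕ →₀ ℕ)) (Ψ : MvPolynomial ℕ ℚ) : ℚ :=
  tensorCoeff L Ψ / (stabCard L : ℚ)

/-- multiplicativity of symmetry factors over connected
components, commutative case. Let `Ψ = Ψ_T · Ψ_V` be a monomial factoring as a
product of monomials with disjoint supports `T` and `V`. For any multiset (list)
`Γ = [S_1,…,S_k]` of nonempty monomials supported in `T` and `Γ' = [S'_1,…,S'_l]`
supported in `V`, the symmetry factor of the concatenation in `G(Ψ)` is the product
of the symmetry factors: `s_{Γ·Γ'}^Ψ = s_Γ^{Ψ_T} · s_{Γ'}^{Ψ_V}`. -/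
theorem symFactor_mul_of_disjoint_support (e₁ e₂ : ℕ →₀ ℕ)
    (hdisj : Disjoint e₁.support e₂.support)
    (L₁ L₂ : List (ℕ →₀ ℕ)) (hL₁ : L₁ ≠ []) (hL₂ : L₂ ≠ [])
    (hsupp₁ : ∀ d ∈ L₁, d ≠ 0 ∧ d.support ⊆ e₁.support)
    (hsupp₂ : ∀ d ∈ L₂, d ≠ 0 ∧ d.support ⊆ e₂.support) :
    symFactor (L₁ ++ L₂) (monomial (e₁ + e₂) 1) =
      symFactor L₁ (monomial e₁ 1) * symFactor L₂ (monomial e₂ 1) := by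
  have hnzAll : ∀ d ∈ L₁ ++ L₂, d ≠ 0 := by
    intro d hd
    rcases List.mem_append.1 hd with h | h
    exacts [(hsupp₁ d h).1, (hsupp₂ d h).1]
  have hnotin : ∀ a ∈ L₁, a ∉ L₂ := by
    intro a h1 h2
    have hs1 := (hsupp₁ a h1).2
    have hs2 := (hsupp₂ a h2).2
    have hse : a.support = ∅ := by
      apply Finset.subset_empty.1
      intro i hi
      exact absurd (hs2 hi) (Finset.disjoint_left.1 hdisj (hs1 hi))
    exact (hsupp₁ a h1).1 (Finsupp.support_eq_empty.1 hse)
  have hstab := stabCard_append hnotin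
  rw [symFactor, symFactor, symFactor, hstab]
  rw [tensorCoeff_monomial_eq (L₁ ++ L₂) (by simp [hL₁]) hnzAll,
    tensorCoeff_monomial_eq L₁ hL₁ (fun d hd => (hsupp₁ d hd).1),
    tensorCoeff_monomial_eq L₂ hL₂ (fun d hd => (hsupp₂ d hd).1)]
  push_cast
  by_cases hc1 : L₁.sum = e₁ <;> by_cases hc2 : L₂.sum = e₂
  · rw [if_pos hc1, if_pos hc2,
      if_pos (by rw [List.sum_append, hc1, hc2])]
    rw [wfac_add_disjoint hdisj, List.map_append, List.prod_append]
    rw [div_mul_div_comm, div_mul_div_comm]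
  · have hneg : ¬(L₁ ++ L₂).sum = e₁ + e₂ := by
      intro h
      rw [List.sum_append] at h
      exact hc2 (sum_split hdisj (support_list_sum fun d hd => (hsupp₁ d hd).2)
        (support_list_sum fun d hd => (hsupp₂ d hd).2) h).2
    rw [if_neg hneg, if_neg hc2, zero_div, zero_div, mul_zero]
  · have hneg : ¬(L₁ ++ L₂).sum = e₁ + e₂ := by
      intro h
      rw [List.sum_append] at h
      exact hc1 (sum_split hdisj (support_list_sum fun d hd => (hsupp₁ d hd).2)
        (support_list_sum fun d hd => (hsupp₂ d hd).2) h).1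
    rw [if_neg hneg, if_neg hc1, zero_div, zero_div, zero_mul]
  · have hneg : ¬(L₁ ++ L₂).sum = e₁ + e₂ := by
      intro h
      rw [List.sum_append] at h
      exact hc1 (sum_split hdisj (support_list_sum fun d hd => (hsupp₁ d hd).2)
        (support_list_sum fun d hd => (hsupp₂ d hd).2) h).1
    rw [if_neg hneg, if_neg hc1, zero_div, zero_div, zero_mul]
end
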